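/- Let A be an n×n Hermitian complex matrix with spectral resolution A = λ₁P₁ + ⋯ + λ_rP_r, where λ₁,…,λ_r are distinct real numbers and P₁,…,P_r are Hermitian matrices satisfying P_iP_j = P_j if i = j, P_iP_j = 0 if i ≠ j, and P₁ + ⋯ + P_r = I, and let B be an n×n Hermitian positive semidefinite matrix. Define K := Σ_{i≠j} P_i B P_j / (λ_i − λ_j). Then [KA]^s + B ≥ (1/2) Σ_{j=1}^{r} P_j B P_j, i.e., the Hermitian matrix [KA]^s + B − (1/2)Σ_j P_j B P_j is positive semidefinite, where [M]^s := (1/2)(M + M*). -/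

import Mathlib

open Matrix Finset
open scoped ComplexOrder

/-- The Hermitian part `[M]ˢ = (1/2)(M + Mᴴ)` of a complex square matrix. -/
noncomputable def hermPart {n : ℕ} (M : Matrix (Fin n) (Fin n) ℂ) :
    Matrix (Fin n) (Fin n) ℂ :=
  (1 / 2 : ℂ) • (M + Mᴴ)

set_option maxHeartbeats 1000000 in
/-- With `A = ∑ λⱼ • Pⱼ` a Hermitian spectral resolution and `B`
Hermitian positive semidefinite, the compensating matrix
`K := ∑_{i ≠ j} (λᵢ - λⱼ)⁻¹ • Pᵢ B Pⱼ` satisfies `[K A]ˢ + B ≥ (1/2) ∑ⱼ Pⱼ B Pⱼ`. -/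
theorem compensator_lower_bound (n r : ℕ)
    (A : Matrix (Fin n) (Fin n) ℂ) (l : Fin r → ℝ)
    (P : Fin r → Matrix (Fin n) (Fin n) ℂ)
    (hdist : Function.Injective l)
    (hPherm : ∀ j, (P j).IsHermitian)
    (hPP : ∀ i j, P i * P j = if i = j then P j else 0)
    (hsum : ∑ j, P j = 1)
    (hA : A = ∑ j, (l j : ℂ) • P j)
    (B : Matrix (Fin n) (Fin n) ℂ) (hB : B.PosSemidef) :
    (hermPart ((∑ i, ∑ j, if i = j then 0 else
          ((l i : ℂ) - (l j : ℂ))⁻¹ • (P i * B * P j)) * A) + B -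
      (1 / 2 : ℂ) • ∑ j, P j * B * P j).PosSemidef := by
  set c : Fin r → Fin r → ℂ := fun i j => ((l i : ℂ) - (l j : ℂ))⁻¹ with hc
  set K : Matrix (Fin n) (Fin n) ℂ :=
    ∑ i, ∑ j, if i = j then 0 else c i j • (P i * B * P j) with hK
  clear_value c K
  -- scalar facts
  have hreal : ∀ i j, star (c i j) = c i j := by
    intro i j
    simp [hc, ← Complex.ofReal_sub, ← Complex.ofReal_inv]
  have hneg : ∀ i j, c j i = - c i j := by
    intro i j
    simp only [hc]
    rw [← neg_sub ((l i : ℂ)), inv_neg]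
  -- P j * A and A * P j
  have hPA : ∀ j, P j * A = (l j : ℂ) • P j := by
    intro j
    rw [hA, Finset.mul_sum]
    rw [Finset.sum_eq_single j]
    · rw [mul_smul_comm, hPP, if_pos rfl]
    · intro k _ hk
      rw [mul_smul_comm, hPP, if_neg (Ne.symm hk), smul_zero]
    · simp
  have hAP : ∀ j, A * P j = (l j : ℂ) • P j := by
    intro j
    rw [hA, Finset.sum_mul]
    rw [Finset.sum_eq_single j]
    · rw [smul_mul_assoc, hPP, if_pos rfl]
    · intro k _ hk
      rw [smul_mul_assoc, hPP, if_neg hk, smul_zero]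
    · simp
  have hKA : K * A = ∑ i, ∑ j, if i = j then 0 else ((l j : ℂ) * c i j) • (P i * B * P j) := by
    rw [hK, Finset.sum_mul]
    refine Finset.sum_congr rfl fun i _ => ?_
    rw [Finset.sum_mul]
    refine Finset.sum_congr rfl fun j _ => ?_
    by_cases h : i = j
    · simp [h]
    · rw [if_neg h, if_neg h, smul_mul_assoc, mul_assoc, mul_assoc, hPA,
        mul_smul_comm, mul_smul_comm, smul_smul, mul_comm (c i j), ← mul_assoc]
  have hAK : A * K = ∑ i, ∑ j, if i = j then 0 else ((l i : ℂ) * c i j) • (P i * B * P j) := by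
    rw [hK, Finset.mul_sum]
    refine Finset.sum_congr rfl fun i _ => ?_
    rw [Finset.mul_sum]
    refine Finset.sum_congr rfl fun j _ => ?_
    by_cases h : i = j
    · simp [h]
    · rw [if_neg h, if_neg h, mul_smul_comm, ← mul_assoc, ← mul_assoc, hAP,
        smul_mul_assoc, smul_mul_assoc, smul_smul, mul_comm (c i j)]
  have hAH : Aᴴ = A := by
    rw [hA]
    simp only [conjTranspose_sum, conjTranspose_smul]
    refine Finset.sum_congr rfl fun j _ => ?_
    rw [(hPherm j).eq]
    simp
  have hKH : Kᴴ = -K := by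
    have hterm : ∀ i j : Fin r,
        (if i = j then (0 : Matrix (Fin n) (Fin n) ℂ) else c i j • (P i * B * P j))ᴴ
          = if i = j then 0 else c i j • (P j * B * P i) := by
      intro i j
      by_cases h : i = j
      · simp [h]
      · rw [if_neg h, if_neg h, conjTranspose_smul, conjTranspose_mul, conjTranspose_mul,
          (hPherm i).eq, (hPherm j).eq, hB.1.eq, hreal, ← mul_assoc]
    rw [hK]
    simp only [conjTranspose_sum, hterm]
    rw [Finset.sum_comm, ← Finset.sum_neg_distrib]
    refine Finset.sum_congr rfl fun i _ => ?_
    rw [← Finset.sum_neg_distrib]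
    refine Finset.sum_congr rfl fun j _ => ?_
    by_cases h : i = j
    · simp [h]
    · rw [if_neg (Ne.symm h), if_neg h, hneg, neg_smul]
  have hKAH : (K * A)ᴴ = -(A * K) := by
    rw [conjTranspose_mul, hAH, hKH, mul_neg]
  -- decomposition of B
  have hBdecomp : B = ∑ i, ∑ j, P i * B * P j := by
    conv_lhs => rw [← one_mul B, ← mul_one (1 * B), ← hsum]
    simp only [Finset.sum_mul, Finset.mul_sum]
    rw [Finset.sum_comm]
  have hsplit : (∑ i, ∑ j, P i * B * P j) =
      (∑ i, ∑ j, if i = j then 0 else P i * B * P j) + ∑ j, P j * B * P j := by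
    rw [← Finset.sum_add_distrib]
    refine Finset.sum_congr rfl fun i _ => ?_
    have : ∑ j, P i * B * P j =
        ∑ j, ((if i = j then 0 else P i * B * P j) + if i = j then P i * B * P j else 0) := by
      refine Finset.sum_congr rfl fun j _ => ?_
      by_cases h : i = j <;> simp [h]
    rw [this, Finset.sum_add_distrib, Finset.sum_ite_eq Finset.univ i (fun j => P i * B * P j)]
    simp
  -- the commutator identity
  have hcomm : K * A + (K * A)ᴴ = -∑ i, ∑ j, if i = j then 0 else P i * B * P j := by
    rw [hKAH, hKA, hAK]
    rw [← sub_eq_add_neg, ← Finset.sum_sub_distrib, ← Finset.sum_neg_distrib]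
    refine Finset.sum_congr rfl fun i _ => ?_
    rw [← Finset.sum_sub_distrib, ← Finset.sum_neg_distrib]
    refine Finset.sum_congr rfl fun j _ => ?_
    by_cases h : i = j
    · simp [h]
    · rw [if_neg h, if_neg h, if_neg h, ← sub_smul, ← neg_one_smul ℂ (P i * B * P j)]
      congr 1
      have hne : (l i : ℂ) - (l j : ℂ) ≠ 0 := by
        rw [sub_ne_zero]
        exact_mod_cast fun he => h (hdist (by exact_mod_cast he))
      simp only [hc]
      rw [← sub_mul, ← neg_sub ((l i : ℂ)) ((l j : ℂ)), neg_mul, mul_inv_cancel₀ hne]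
  -- the whole expression equals (1/2) • B
  have hgen : ∀ (O D : Matrix (Fin n) (Fin n) ℂ),
      (1 / 2 : ℂ) • (-O) + (O + D) - (1 / 2 : ℂ) • D = (1 / 2 : ℂ) • (O + D) := by
    intros O D; module
  set O : Matrix (Fin n) (Fin n) ℂ := ∑ i, ∑ j, if i = j then 0 else P i * B * P j with hO
  set D : Matrix (Fin n) (Fin n) ℂ := ∑ j, P j * B * P j with hD
  clear_value O D
  have hBOD : B = O + D := hBdecomp.trans hsplit
  have hmain : hermPart (K * A) + B - (1 / 2 : ℂ) • D = (1 / 2 : ℂ) • B := by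
    rw [hermPart, hcomm, hBOD]
    exact hgen O D
  rw [hmain]
  have h2 : (0 : ℂ) ≤ (1 / 2 : ℂ) := by
    rw [show ((1 / 2 : ℂ)) = ((1 / 2 : ℝ) : ℂ) by norm_num]
    exact_mod_cast (by norm_num : (0:ℝ) ≤ 1/2)
  refine ⟨?_, fun x => ?_⟩
  · unfold Matrix.IsHermitian
    rw [conjTranspose_smul, hB.1.eq]
    norm_num
  · exact (hB.smul h2).2 x
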